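/- arXiv:2208.11598 — 2 statements merged into one kernel-verified Lean document; each statement's English description precedes it below -/
import Mathlib

section
/- For every τ ∈ ℂ with nonnegative real part (or τ ∈ ℝ), σ ∈ ℝ, μ, λ ∈ ℝ, and nonzero ξ ∈ ℝⁿ, exp(−τ((μ|ξ|² + iσ)Iₙ + (μ+λ) ξ ⊗ ξ)) = e^{−τ(μ|ξ|²+iσ)} Iₙ + (e^{−τ((2μ+λ)|ξ|²+iσ)} − e^{−τ(μ|ξ|²+iσ)}) (ξ ⊗ ξ)/|ξ|², where the matrices are regarded as complex matrices. -/
open Matrix Complex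

lemma exp_smul_idem {m : Type*} [Fintype m] [DecidableEq m] (P : Matrix m m ℂ)
    (hP : P * P = P) (c : ℂ) :
    NormedSpace.exp (c • P) = 1 + (Complex.exp c - 1) • P := by
  have hpow : ∀ k : ℕ, P ^ (k + 1) = P := by
    intro k
    induction k with
    | zero => simp
    | succ k ih => rw [pow_succ, ih, hP]
  have hexp : HasSum (fun k : ℕ => ((Nat.factorial k : ℂ))⁻¹ • c ^ k) (Complex.exp c) := by
    rw [Complex.exp_eq_exp_ℂ]
    exact NormedSpace.exp_series_hasSum_exp' c
  have hfun : (fun k : ℕ => ((Nat.factorial k : ℂ))⁻¹ • (c • P) ^ k)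
      = fun k : ℕ => (((Nat.factorial k : ℂ))⁻¹ • c ^ k) • P + (if k = 0 then 1 - P else 0) := by
    funext k
    cases k with
    | zero => simp
    | succ k =>
      simp only [smul_pow, hpow, Nat.succ_ne_zero, if_false, add_zero, smul_smul, smul_eq_mul]
  have hsum : HasSum (fun k : ℕ => ((Nat.factorial k : ℂ))⁻¹ • (c • P) ^ k)
      (Complex.exp c • P + (1 - P)) := by
    rw [hfun]
    exact (hexp.smul_const P).add (hasSum_ite_eq 0 (1 - P))
  calc NormedSpace.exp (c • P)
      = ∑' k : ℕ, ((Nat.factorial k : ℂ))⁻¹ • (c • P) ^ k := by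
        rw [NormedSpace.exp_eq_tsum (𝕂 := ℂ)]
    _ = 1 + (Complex.exp c - 1) • P := by
        rw [hsum.tsum_eq, sub_smul, one_smul]; abel

/-- For `τ ∈ ℂ` with nonnegative real part, `σ ∈ ℝ`, `μ, λ ∈ ℝ`, and nonzero `ξ ∈ ℝⁿ`,
`exp(−τ((μ|ξ|² + iσ)Iₙ + (μ+λ) ξ⊗ξ)) = e^{−τ(μ|ξ|²+iσ)} Iₙ
  + (e^{−τ((2μ+λ)|ξ|²+iσ)} − e^{−τ(μ|ξ|²+iσ)}) (ξ⊗ξ)/|ξ|²`, as complex matrices. -/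
theorem stmt_3 (n : ℕ) (τ : ℂ) (hτ : 0 ≤ τ.re) (σ μ lam : ℝ) (ξ : Fin n → ℝ) (hξ : ξ ≠ 0) :
    NormedSpace.exp
        ((-τ) • (((μ * ∑ i, ξ i ^ 2 : ℝ) + (σ : ℂ) * Complex.I) •
            (1 : Matrix (Fin n) (Fin n) ℂ)
          + ((μ : ℂ) + (lam : ℂ)) • (vecMulVec ξ ξ).map ((↑) : ℝ → ℂ))) =
      Complex.exp (-τ * ((μ * ∑ i, ξ i ^ 2 : ℝ) + (σ : ℂ) * Complex.I)) •
          (1 : Matrix (Fin n) (Fin n) ℂ)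
        + (Complex.exp (-τ * (((2 * μ + lam) * ∑ i, ξ i ^ 2 : ℝ) + (σ : ℂ) * Complex.I))
            - Complex.exp (-τ * ((μ * ∑ i, ξ i ^ 2 : ℝ) + (σ : ℂ) * Complex.I))) •
          (((∑ i, ξ i ^ 2 : ℝ) : ℂ)⁻¹ • (vecMulVec ξ ξ).map ((↑) : ℝ → ℂ)) := by
  set S : ℝ := ∑ i, ξ i ^ 2 with hS
  have hSpos : 0 < S := by
    obtain ⟨i, hi⟩ := Function.ne_iff.mp hξ
    exact Finset.sum_pos' (fun j _ => sq_nonneg _) ⟨i, Finset.mem_univ i, lt_of_le_of_ne (sq_nonneg _) (Ne.symm (pow_ne_zero 2 hi))⟩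
  have hS0 : ((S : ℝ) : ℂ) ≠ 0 := by exact_mod_cast hSpos.ne'
  set Q : Matrix (Fin n) (Fin n) ℂ := (vecMulVec ξ ξ).map ((↑) : ℝ → ℂ) with hQ
  have hQQ : Q * Q = ((S : ℝ) : ℂ) • Q := by
    ext i j
    simp only [hQ, mul_apply, map_apply, vecMulVec_apply, Matrix.smul_apply, smul_eq_mul, hS]
    push_cast
    rw [Finset.sum_congr rfl (fun k _ => by ring : ∀ k ∈ Finset.univ,
      (ξ i : ℂ) * ξ k * ((ξ k : ℂ) * ξ j) = (ξ k : ℂ) ^ 2 * (ξ i * ξ j)),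
      ← Finset.sum_mul]
    all_goals ring
  set P : Matrix (Fin n) (Fin n) ℂ := ((S : ℝ) : ℂ)⁻¹ • Q with hPdef
  have hP : P * P = P := by
    rw [hPdef, smul_mul_smul_comm, hQQ, smul_smul]
    rw [mul_assoc, inv_mul_cancel₀ hS0, mul_one]
  have hQP : Q = ((S : ℝ) : ℂ) • P := by
    rw [hPdef, smul_smul, mul_inv_cancel₀ hS0, one_smul]
  set a : ℂ := -τ * ((μ * S : ℝ) + (σ : ℂ) * Complex.I) with ha
  set d : ℂ := -τ * ((μ : ℂ) + lam) * S with hd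
  have harg : (-τ) • (((μ * S : ℝ) + (σ : ℂ) * Complex.I) •
      (1 : Matrix (Fin n) (Fin n) ℂ) + ((μ : ℂ) + (lam : ℂ)) • Q)
      = a • (1 : Matrix (Fin n) (Fin n) ℂ) + d • P := by
    rw [hQP, smul_add, smul_smul, smul_smul, smul_smul, ha, hd]
    all_goals ring_nf
  rw [harg]
  have hcomm : Commute (a • (1 : Matrix (Fin n) (Fin n) ℂ)) (d • P) :=
    ((Commute.one_left (d • P)).smul_left a)
  rw [Matrix.exp_add_of_commute _ _ hcomm]
  have h1 : NormedSpace.exp (a • (1 : Matrix (Fin n) (Fin n) ℂ))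
      = Complex.exp a • 1 := by
    rw [exp_smul_idem 1 (one_mul 1) a, sub_smul, one_smul]
    abel
  rw [h1, exp_smul_idem P hP d]
  have hsum2 : Complex.exp (-τ * (((2 * μ + lam) * S : ℝ) + (σ : ℂ) * Complex.I))
      = Complex.exp a * Complex.exp d := by
    rw [← Complex.exp_add]
    congr 1
    rw [ha, hd]
    push_cast
    ring
  rw [hsum2]
  rw [smul_mul_assoc, one_mul, smul_add, smul_smul]
  congr 2
  ring
end

section
/- For every s ∈ (0,1) and every complex number z with positive real part, one has z^s = − (s/Γ(1−s)) ∫₀^∞ (e^{−τz} − 1) τ^{−1−s} dτ, where z^s denotes the principal branch of the complex power and Γ is the Gamma function. -/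
open MeasureTheory Set Filter Complex Metric Topology

namespace Bala

variable {s : ℝ}

/-- measurability helper -/
lemma contOn_aux (z : ℂ) (r : ℝ) :
    ContinuousOn (fun τ : ℝ => Complex.exp (-(τ:ℂ) * z) * ((τ ^ r : ℝ) : ℂ)) (Ioi 0) := by
  have c1 : Continuous fun τ : ℝ => Complex.exp (-(τ:ℂ) * z) := by fun_prop
  apply c1.continuousOn.mul
  intro τ hτ
  exact (Complex.continuous_ofReal.continuousAt.comp
    (Real.continuousAt_rpow_const τ r (Or.inl (ne_of_gt hτ)))).continuousWithinAt

lemma norm_aux (z : ℂ) (r : ℝ) {τ : ℝ} (hτ : 0 < τ) :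
    ‖Complex.exp (-(τ:ℂ) * z) * ((τ ^ r : ℝ) : ℂ)‖ = Real.exp (-(z.re) * τ) * τ ^ r := by
  rw [norm_mul, Complex.norm_exp, Complex.norm_real, Real.norm_eq_abs,
    _root_.abs_of_nonneg (Real.rpow_nonneg hτ.le r)]
  congr 2
  simp [Complex.mul_re]
  ring

/-- Integrability of `exp(-τz) τ^r` for `r > -1`, `Re z > 0`. -/
lemma integrableA {z : ℂ} (hz : 0 < z.re) {r : ℝ} (hr : -1 < r) :
    IntegrableOn (fun τ : ℝ => Complex.exp (-(τ:ℂ) * z) * ((τ ^ r : ℝ) : ℂ)) (Ioi 0) := by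
  have base : IntegrableOn (fun τ : ℝ => τ ^ r * Real.exp (-z.re * τ ^ (1:ℝ))) (Ioi 0) :=
    integrableOn_rpow_mul_exp_neg_mul_rpow hr zero_lt_one hz
  refine Integrable.mono' base ((contOn_aux z r).aestronglyMeasurable measurableSet_Ioi) ?_
  filter_upwards [ae_restrict_mem measurableSet_Ioi] with τ hτ
  rw [norm_aux z r hτ, Real.rpow_one]
  exact le_of_eq (mul_comm _ _)


lemma integrableR {b r : ℝ} (hb : 0 < b) (hr : -1 < r) :
    IntegrableOn (fun τ : ℝ => τ ^ r * Real.exp (-b * τ)) (Ioi 0) := by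
  simpa [Real.rpow_one] using integrableOn_rpow_mul_exp_neg_mul_rpow hr zero_lt_one hb

lemma contOn_aux' (z : ℂ) (r : ℝ) :
    ContinuousOn (fun τ : ℝ => Complex.exp (-(τ:ℂ) * z) * (-(τ:ℂ)) * ((τ ^ r : ℝ) : ℂ)) (Ioi 0) := by
  have c1 : Continuous fun τ : ℝ => Complex.exp (-(τ:ℂ) * z) * (-(τ:ℂ)) := by fun_prop
  apply c1.continuousOn.mul
  intro τ hτ
  exact (Complex.continuous_ofReal.continuousAt.comp
    (Real.continuousAt_rpow_const τ r (Or.inl (ne_of_gt hτ)))).continuousWithinAt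

set_option maxHeartbeats 1000000 in
lemma diffF (hs : s ∈ Ioo (0:ℝ) 1) {z : ℂ} (hz : 0 < z.re) :
    DifferentiableAt ℂ
      (fun w : ℂ => ∫ τ : ℝ in Ioi (0:ℝ), Complex.exp (-(τ:ℂ) * w) * ((τ ^ (-s) : ℝ) : ℂ)) z := by
  have hε : 0 < z.re / 2 := by positivity
  have h_bound : ∀ᵐ (τ:ℝ) ∂(volume.restrict (Ioi (0:ℝ))), ∀ w ∈ ball z (z.re / 2),
      ‖Complex.exp (-(τ:ℂ) * w) * (-(τ:ℂ)) * ((τ ^ (-s) : ℝ) : ℂ)‖ ≤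
        τ ^ (1 - s) * Real.exp (-(z.re / 2) * τ) := by
    filter_upwards [ae_restrict_mem measurableSet_Ioi] with τ hτ
    intro w hw
    have hre : z.re / 2 ≤ w.re := by
      have h1 : |(w - z).re| ≤ ‖w - z‖ := Complex.abs_re_le_norm _
      have h2 : ‖w - z‖ < z.re / 2 := mem_ball_iff_norm.mp hw
      have := abs_le.mp (h1.trans h2.le)
      simp only [Complex.sub_re] at this
      linarith [this.1]
    have hτ' : (0:ℝ) < τ := hτ
    rw [norm_mul, norm_mul, Complex.norm_exp]
    have e1 : (-(τ:ℂ) * w).re = -(w.re) * τ := by simp [Complex.mul_re]; ring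
    rw [e1]
    have e2 : ‖(-(τ:ℂ))‖ = τ := by
      rw [norm_neg, Complex.norm_real, Real.norm_eq_abs, _root_.abs_of_pos hτ']
    have e3 : ‖((τ ^ (-s) : ℝ) : ℂ)‖ = τ ^ (-s) := by
      rw [Complex.norm_real, Real.norm_eq_abs, _root_.abs_of_nonneg (Real.rpow_nonneg hτ'.le _)]
    rw [e2, e3]
    have e4 : τ * τ ^ (-s) = τ ^ (1 - s) := by
      rw [show (1:ℝ) - s = 1 + (-s) by ring, Real.rpow_add hτ', Real.rpow_one]
    calc Real.exp (-w.re * τ) * τ * τ ^ (-s)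
        ≤ Real.exp (-(z.re/2) * τ) * τ * τ ^ (-s) := by
          have hτs : 0 ≤ τ ^ (-s) := Real.rpow_nonneg hτ'.le _
          have h := Real.exp_le_exp.mpr (by nlinarith : -w.re * τ ≤ -(z.re/2) * τ)
          exact mul_le_mul_of_nonneg_right (mul_le_mul_of_nonneg_right h hτ'.le) hτs
      _ = τ ^ (1-s) * Real.exp (-(z.re/2) * τ) := by rw [mul_assoc, e4]; ring
  have h_diff : ∀ᵐ (τ:ℝ) ∂(volume.restrict (Ioi (0:ℝ))), ∀ w ∈ ball z (z.re / 2),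
      HasDerivAt (fun w => Complex.exp (-(τ:ℂ) * w) * ((τ ^ (-s) : ℝ) : ℂ))
        (Complex.exp (-(τ:ℂ) * w) * (-(τ:ℂ)) * ((τ ^ (-s) : ℝ) : ℂ)) w := by
    refine ae_of_all _ fun τ => fun w _ => ?_
    have h1 : HasDerivAt (fun w : ℂ => -(τ:ℂ) * w) (-(τ:ℂ)) w := by
      simpa using (hasDerivAt_id w).const_mul (-(τ:ℂ))
    exact (h1.cexp.mul_const _)
  exact (hasDerivAt_integral_of_dominated_loc_of_deriv_le
    (F := fun (w:ℂ) (τ:ℝ) => Complex.exp (-(τ:ℂ) * w) * ((τ ^ (-s) : ℝ) : ℂ))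
    (F' := fun (w:ℂ) (τ:ℝ) => Complex.exp (-(τ:ℂ) * w) * (-(τ:ℂ)) * ((τ ^ (-s) : ℝ) : ℂ)) (ball_mem_nhds z hε)
    (Eventually.of_forall fun w => (contOn_aux w (-s)).aestronglyMeasurable measurableSet_Ioi)
    (integrableA hz (by linarith [hs.2]))
    ((contOn_aux' z (-s)).aestronglyMeasurable measurableSet_Ioi)
    h_bound (integrableR hε (by linarith [hs.2])) h_diff).2.differentiableAt


lemma realCase (hs : s ∈ Ioo (0:ℝ) 1) {x : ℝ} (hx : 0 < x) :
    ∫ τ : ℝ in Ioi (0:ℝ), Complex.exp (-(τ:ℂ) * (x:ℂ)) * ((τ ^ (-s) : ℝ) : ℂ) =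
      (Real.Gamma (1-s) : ℂ) * (x:ℂ) ^ ((s:ℂ) - 1) := by
  have ha : 0 < (1 - (s:ℂ)).re := by
    simp only [Complex.sub_re, Complex.one_re, Complex.ofReal_re]
    linarith [hs.2]
  have key := integral_cpow_mul_exp_neg_mul_Ioi ha hx
  have hL : ∫ τ : ℝ in Ioi (0:ℝ), Complex.exp (-(τ:ℂ) * (x:ℂ)) * ((τ ^ (-s) : ℝ) : ℂ) =
      ∫ t : ℝ in Ioi (0:ℝ), (t:ℂ) ^ ((1 - (s:ℂ)) - 1) * Complex.exp (-((x:ℂ) * (t:ℂ))) := by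
    refine setIntegral_congr_fun measurableSet_Ioi fun t ht => ?_
    rw [mem_Ioi] at ht
    have e1 : ((t ^ (-s) : ℝ) : ℂ) = (t:ℂ) ^ ((1 - (s:ℂ)) - 1) := by
      rw [Complex.ofReal_cpow ht.le]
      norm_num
    have e2 : (-(t:ℂ) * (x:ℂ)) = -((x:ℂ) * (t:ℂ)) := by ring
    rw [e1, e2, mul_comm]
  rw [hL, key]
  have hx0 : (x:ℂ) ≠ 0 := Complex.ofReal_ne_zero.mpr hx.ne'
  have harg : (x:ℂ).arg ≠ Real.pi := by
    rw [Complex.arg_ofReal_of_nonneg hx.le]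
    exact (Real.pi_ne_zero).symm
  rw [one_div, Complex.inv_cpow _ _ harg, ← Complex.cpow_neg]
  have e3 : -(1 - (s:ℂ)) = (s:ℂ) - 1 := by ring
  have e4 : (1 - (s:ℂ)) = ((1 - s : ℝ) : ℂ) := by push_cast; ring
  rw [e3, e4, Complex.Gamma_ofReal, mul_comm]

lemma gammaComplex (hs : s ∈ Ioo (0:ℝ) 1) {z : ℂ} (hz : 0 < z.re) :
    ∫ τ : ℝ in Ioi (0:ℝ), Complex.exp (-(τ:ℂ) * z) * ((τ ^ (-s) : ℝ) : ℂ) =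
      (Real.Gamma (1-s) : ℂ) * z ^ ((s:ℂ) - 1) := by
  set U : Set ℂ := {w | 0 < w.re} with hUdef
  have hU : IsOpen U := isOpen_lt continuous_const Complex.continuous_re
  have hUc : IsPreconnected U := (convex_halfSpace_re_gt 0).isPreconnected
  have hf : AnalyticOnNhd ℂ
      (fun w : ℂ => ∫ τ : ℝ in Ioi (0:ℝ), Complex.exp (-(τ:ℂ) * w) * ((τ ^ (-s) : ℝ) : ℂ)) U := by
    refine DifferentiableOn.analyticOnNhd (fun w hw => ?_) hU
    exact (diffF hs hw).differentiableWithinAt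
  have hg : AnalyticOnNhd ℂ (fun w : ℂ => (Real.Gamma (1-s) : ℂ) * w ^ ((s:ℂ) - 1)) U := by
    refine DifferentiableOn.analyticOnNhd (fun w hw => ?_) hU
    exact ((differentiableAt_id.cpow (differentiableAt_const _) (Or.inl hw)).const_mul
      _).differentiableWithinAt
  have h1U : (1:ℂ) ∈ U := by simp [hUdef]
  have htend : Tendsto (fun x : ℝ => (x:ℂ)) (nhdsWithin 1 {(1:ℝ)}ᶜ) (nhdsWithin 1 {(1:ℂ)}ᶜ) := by
    apply tendsto_nhdsWithin_of_tendsto_nhds_of_eventually_within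
    · have := (Complex.continuous_ofReal.tendsto (1:ℝ)).mono_left
        (nhdsWithin_le_nhds (s := {(1:ℝ)}ᶜ))
      exact_mod_cast this
    · filter_upwards [self_mem_nhdsWithin] with x hx
      simp only [Set.mem_compl_iff, Set.mem_singleton_iff] at hx ⊢
      exact_mod_cast hx
  have hfreq : ∃ᶠ w in nhdsWithin (1:ℂ) {(1:ℂ)}ᶜ,
      (∫ τ : ℝ in Ioi (0:ℝ), Complex.exp (-(τ:ℂ) * w) * ((τ ^ (-s) : ℝ) : ℂ)) =
        (Real.Gamma (1-s) : ℂ) * w ^ ((s:ℂ) - 1) := by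
    apply htend.frequently
    have hev : ∀ᶠ x : ℝ in nhdsWithin 1 {(1:ℝ)}ᶜ, 0 < x :=
      ((eventually_gt_nhds (by norm_num : (0:ℝ) < 1)).filter_mono nhdsWithin_le_nhds)
    exact (hev.mono fun x hx => realCase hs hx).frequently
  exact hf.eqOn_of_preconnected_of_frequently_eq hg hUc h1U hfreq hz


lemma contOnB (z : ℂ) (r : ℝ) :
    ContinuousOn (fun τ : ℝ => (Complex.exp (-(τ:ℂ) * z) - 1) * ((τ ^ r : ℝ) : ℂ)) (Ioi 0) := by
  have c1 : Continuous fun τ : ℝ => Complex.exp (-(τ:ℂ) * z) - 1 := by fun_prop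
  apply c1.continuousOn.mul
  intro τ hτ
  exact (Complex.continuous_ofReal.continuousAt.comp
    (Real.continuousAt_rpow_const τ r (Or.inl (ne_of_gt hτ)))).continuousWithinAt

lemma normB {z : ℂ} {τ : ℝ} (hτ : 0 < τ) (r : ℝ) :
    ‖(Complex.exp (-(τ:ℂ) * z) - 1) * ((τ ^ r : ℝ) : ℂ)‖
      = ‖Complex.exp (-(τ:ℂ) * z) - 1‖ * τ ^ r := by
  rw [norm_mul, Complex.norm_real, Real.norm_eq_abs,
    _root_.abs_of_nonneg (Real.rpow_nonneg hτ.le r)]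

lemma exp_bound_small {z : ℂ} {τ : ℝ} (hτ : 0 < τ) (hδ : τ ≤ (‖z‖ + 1)⁻¹) :
    ‖Complex.exp (-(τ:ℂ) * z) - 1‖ ≤ 2 * ‖z‖ * τ := by
  have hn : ‖-(τ:ℂ) * z‖ = τ * ‖z‖ := by
    rw [norm_mul, norm_neg, Complex.norm_real, Real.norm_eq_abs, _root_.abs_of_pos hτ]
  have h1 : ‖-(τ:ℂ) * z‖ ≤ 1 := by
    rw [hn]
    have hz1 : 0 < ‖z‖ + 1 := by positivity
    calc τ * ‖z‖ ≤ (‖z‖ + 1)⁻¹ * ‖z‖ := by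
          apply mul_le_mul_of_nonneg_right hδ (norm_nonneg z)
      _ ≤ 1 := by
          rw [inv_mul_le_iff₀ hz1]; linarith [norm_nonneg z]
  calc ‖Complex.exp (-(τ:ℂ) * z) - 1‖ ≤ 2 * ‖-(τ:ℂ) * z‖ :=
        Complex.norm_exp_sub_one_le h1
    _ = 2 * ‖z‖ * τ := by rw [hn]; ring

lemma exp_bound_two {z : ℂ} (hz : 0 < z.re) {τ : ℝ} (hτ : 0 ≤ τ) :
    ‖Complex.exp (-(τ:ℂ) * z) - 1‖ ≤ 2 := by
  calc ‖Complex.exp (-(τ:ℂ) * z) - 1‖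
      ≤ ‖Complex.exp (-(τ:ℂ) * z)‖ + 1 := by
        simpa using norm_sub_le (Complex.exp (-(τ:ℂ) * z)) 1
    _ ≤ 1 + 1 := by
        gcongr
        rw [Complex.norm_exp]
        have : (-(τ:ℂ) * z).re = -(z.re) * τ := by simp [Complex.mul_re]; ring
        rw [this]
        exact Real.exp_le_one_iff.mpr (by nlinarith)
    _ = 2 := by norm_num

lemma integrableB (hs : s ∈ Ioo (0:ℝ) 1) {z : ℂ} (hz : 0 < z.re) :
    IntegrableOn (fun τ : ℝ => (Complex.exp (-(τ:ℂ) * z) - 1) * ((τ ^ (-1-s) : ℝ) : ℂ)) (Ioi 0) := by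
  set δ : ℝ := min 1 (‖z‖ + 1)⁻¹ with hδdef
  have hδ : 0 < δ := lt_min one_pos (by positivity)
  have hsplit : Ioc (0:ℝ) δ ∪ Ioi δ = Ioi 0 := Ioc_union_Ioi_eq_Ioi hδ.le
  rw [← hsplit]
  apply IntegrableOn.union
  · -- near 0
    have base : IntegrableOn (fun τ : ℝ => 2 * ‖z‖ * τ ^ (-s)) (Ioc 0 δ) := by
      have h0 : IntervalIntegrable (fun τ : ℝ => τ ^ (-s)) volume 0 δ :=
        intervalIntegral.intervalIntegrable_rpow' (by linarith [hs.2])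
      have := (intervalIntegrable_iff_integrableOn_Ioc_of_le hδ.le).mp h0
      simpa [mul_assoc, IntegrableOn] using this.const_mul (2 * ‖z‖)
    refine Integrable.mono' base
      (((contOnB z (-1-s)).mono (Ioc_subset_Ioi_self)).aestronglyMeasurable measurableSet_Ioc) ?_
    filter_upwards [ae_restrict_mem measurableSet_Ioc] with τ hτ
    have hτ0 : 0 < τ := hτ.1
    rw [normB hτ0]
    have hb := exp_bound_small (z := z) hτ0 (hτ.2.trans (min_le_right _ _))
    have e1 : τ * τ ^ (-1-s) = τ ^ (-s) := by
      nth_rewrite 1 [← Real.rpow_one τ]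
      rw [← Real.rpow_add hτ0, show (1:ℝ) + (-1 - s) = -s by ring]
    calc ‖Complex.exp (-(τ:ℂ) * z) - 1‖ * τ ^ (-1-s)
        ≤ (2 * ‖z‖ * τ) * τ ^ (-1-s) :=
          mul_le_mul_of_nonneg_right hb (Real.rpow_nonneg hτ0.le _)
      _ = 2 * ‖z‖ * τ ^ (-s) := by rw [mul_assoc, e1]
  · -- tail
    have base : IntegrableOn (fun τ : ℝ => 2 * τ ^ (-1-s)) (Ioi δ) :=
      (integrableOn_Ioi_rpow_of_lt (by linarith [hs.1]) hδ).const_mul 2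
    refine Integrable.mono' base
      (((contOnB z (-1-s)).mono (fun x hx => lt_trans hδ hx)).aestronglyMeasurable
        measurableSet_Ioi) ?_
    filter_upwards [ae_restrict_mem measurableSet_Ioi] with τ hτ
    have hτ0 : 0 < τ := lt_trans hδ hτ
    rw [normB hτ0]
    exact mul_le_mul_of_nonneg_right (exp_bound_two hz hτ0.le) (Real.rpow_nonneg hτ0.le _)


set_option maxHeartbeats 1000000 in
lemma ibp (hs : s ∈ Ioo (0:ℝ) 1) {z : ℂ} (hz : 0 < z.re) :
    ∫ τ : ℝ in Ioi (0:ℝ), (Complex.exp (-(τ:ℂ) * z) - 1) * ((τ ^ (-1-s) : ℝ) : ℂ) =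
      -(z / (s:ℂ)) * ∫ τ : ℝ in Ioi (0:ℝ), Complex.exp (-(τ:ℂ) * z) * ((τ ^ (-s) : ℝ) : ℂ) := by
  have hs0 : (s:ℂ) ≠ 0 := Complex.ofReal_ne_zero.mpr (ne_of_gt hs.1)
  set F : ℝ → ℂ := fun τ => (Complex.exp (-(τ:ℂ) * z) - 1) * ((τ ^ (-s) : ℝ) : ℂ) * (-(s:ℂ))⁻¹
    with hFdef
  set F' : ℝ → ℂ := fun τ => (Complex.exp (-(τ:ℂ) * z) - 1) * ((τ ^ (-1-s) : ℝ) : ℂ) +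
      (z / (s:ℂ)) * (Complex.exp (-(τ:ℂ) * z) * ((τ ^ (-s) : ℝ) : ℂ)) with hF'def
  have hF0 : F 0 = 0 := by
    simp [hFdef]
  -- derivative
  have hderiv : ∀ τ ∈ Ioi (0:ℝ), HasDerivAt F (F' τ) τ := by
    intro τ hτ
    have hτ0 : (0:ℝ) < τ := hτ
    have hu : HasDerivAt (fun τ : ℝ => Complex.exp (-(τ:ℂ) * z) - 1)
        (Complex.exp (-(τ:ℂ) * z) * (-z)) τ := by
      have hi : HasDerivAt (fun τ : ℝ => -(τ:ℂ) * z) (-z) τ := by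
        have h1 : HasDerivAt (fun τ : ℝ => ((τ:ℝ) : ℂ)) 1 τ := (hasDerivAt_id τ).ofReal_comp
        simpa using (h1.neg.mul_const z)
      exact (hi.cexp).sub_const 1
    have hv : HasDerivAt (fun τ : ℝ => ((τ ^ (-s) : ℝ) : ℂ))
        (((-s * τ ^ (-s - 1) : ℝ)) : ℂ) τ := by
      exact (Real.hasDerivAt_rpow_const (Or.inl hτ0.ne')).ofReal_comp
    have hF : HasDerivAt F
        ((Complex.exp (-(τ:ℂ) * z) * (-z) * ((τ ^ (-s) : ℝ) : ℂ) +
          (Complex.exp (-(τ:ℂ) * z) - 1) * (((-s * τ ^ (-s - 1) : ℝ)) : ℂ)) * (-(s:ℂ))⁻¹) τ :=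
      (hu.mul hv).mul_const _
    convert hF using 1
    simp only [hF'def]
    rw [show (-1-s:ℝ) = -s-1 by ring]
    push_cast
    field_simp [hs0]
    ring
  -- continuity at 0
  have hcont : ContinuousWithinAt F (Ici 0) 0 := by
    rw [ContinuousWithinAt, hF0]
    set c : ℝ := 2 * ‖z‖ * ‖(-(s:ℂ))⁻¹‖ with hcdef
    apply squeeze_zero_norm' (a := fun τ : ℝ => c * τ ^ (1 - s))
    · have h1 : ∀ᶠ τ : ℝ in nhdsWithin 0 (Ici 0), τ < (‖z‖ + 1)⁻¹ :=
        (eventually_lt_nhds (by positivity : (0:ℝ) < (‖z‖+1)⁻¹)).filter_mono nhdsWithin_le_nhds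
      filter_upwards [self_mem_nhdsWithin, h1] with τ hτ hτδ
      rcases eq_or_lt_of_le (Set.mem_Ici.mp hτ) with h | hτ0
      · simp [hFdef, ← h, Real.zero_rpow (by linarith [hs.2] : (1:ℝ) - s ≠ 0)]
      · rw [hFdef]
        simp only [norm_mul]
        rw [Complex.norm_real, Real.norm_eq_abs,
          _root_.abs_of_nonneg (Real.rpow_nonneg hτ0.le _)]
        have hb := exp_bound_small (z := z) hτ0 hτδ.le
        have e4 : τ * τ ^ (-s) = τ ^ (1 - s) := by
          nth_rewrite 1 [← Real.rpow_one τ]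
          rw [← Real.rpow_add hτ0, show (1:ℝ) + -s = 1 - s by ring]
        calc ‖Complex.exp (-(τ:ℂ) * z) - 1‖ * τ ^ (-s) * ‖(-(s:ℂ))⁻¹‖
            ≤ 2 * ‖z‖ * τ * τ ^ (-s) * ‖(-(s:ℂ))⁻¹‖ := by
              have := mul_le_mul_of_nonneg_right hb (Real.rpow_nonneg hτ0.le (-s))
              exact mul_le_mul_of_nonneg_right this (norm_nonneg _)
          _ = c * τ ^ (1 - s) := by rw [hcdef, mul_assoc (2*‖z‖), e4]; ring
    · have h0 : Tendsto (fun τ : ℝ => τ ^ (1 - s)) (nhdsWithin 0 (Ici 0)) (𝓝 0) := by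
        have hc : ContinuousAt (fun τ : ℝ => τ ^ (1 - s)) 0 :=
          Real.continuousAt_rpow_const 0 (1-s) (Or.inr (by linarith [hs.2]))
        have := hc.tendsto.mono_left (nhdsWithin_le_nhds (s := Ici (0:ℝ)))
        simpa [Real.zero_rpow (by linarith [hs.2] : (1:ℝ) - s ≠ 0)] using this
      simpa using h0.const_mul c
  -- limit at infinity
  have htop : Tendsto F atTop (𝓝 0) := by
    apply squeeze_zero_norm' (a := fun τ : ℝ => (2 * ‖(-(s:ℂ))⁻¹‖) * τ ^ (-s))
    · filter_upwards [eventually_gt_atTop (0:ℝ)] with τ hτ0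
      rw [hFdef]
      simp only [norm_mul]
      rw [Complex.norm_real, Real.norm_eq_abs,
        _root_.abs_of_nonneg (Real.rpow_nonneg hτ0.le _)]
      have hb := exp_bound_two hz hτ0.le
      have := mul_le_mul_of_nonneg_right
        (mul_le_mul_of_nonneg_right hb (Real.rpow_nonneg hτ0.le (-s))) (norm_nonneg (-(s:ℂ))⁻¹)
      calc ‖Complex.exp (-(τ:ℂ) * z) - 1‖ * τ ^ (-s) * ‖(-(s:ℂ))⁻¹‖
          ≤ 2 * τ ^ (-s) * ‖(-(s:ℂ))⁻¹‖ := this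
        _ = (2 * ‖(-(s:ℂ))⁻¹‖) * τ ^ (-s) := by ring
    · simpa using (tendsto_rpow_neg_atTop hs.1).const_mul (2 * ‖(-(s:ℂ))⁻¹‖)
  -- integrability of F'
  have hintA : IntegrableOn (fun τ : ℝ => Complex.exp (-(τ:ℂ) * z) * ((τ ^ (-s) : ℝ) : ℂ))
      (Ioi 0) := integrableA hz (by linarith [hs.2])
  have hintB := integrableB hs hz
  have hintF' : IntegrableOn F' (Ioi 0) := by
    rw [hF'def]
    exact hintB.add (hintA.const_mul _)
  have key := integral_Ioi_of_hasDerivAt_of_tendsto hcont hderiv hintF' htop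
  rw [hF0, sub_zero] at key
  have split : ∫ τ : ℝ in Ioi (0:ℝ), F' τ =
      (∫ τ : ℝ in Ioi (0:ℝ), (Complex.exp (-(τ:ℂ) * z) - 1) * ((τ ^ (-1-s) : ℝ) : ℂ)) +
        (z / (s:ℂ)) * ∫ τ : ℝ in Ioi (0:ℝ), Complex.exp (-(τ:ℂ) * z) * ((τ ^ (-s) : ℝ) : ℂ) := by
    rw [hF'def]
    rw [integral_add hintB (hintA.const_mul _), MeasureTheory.integral_const_mul]
  rw [split] at key
  linear_combination key

end Bala

open Bala in
/-- Balakrishnan scalar identity: for `s ∈ (0,1)` and `Re z > 0`,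
`z^s = −(s/Γ(1−s)) ∫₀^∞ (e^{−τz} − 1) τ^{−1−s} dτ`. -/
theorem stmt_6 (s : ℝ) (hs : s ∈ Set.Ioo (0 : ℝ) 1) (z : ℂ) (hz : 0 < z.re) :
    z ^ (s : ℂ) =
      -((s : ℂ) / (Real.Gamma (1 - s) : ℂ)) *
        ∫ τ in Set.Ioi (0 : ℝ), (Complex.exp (-(τ : ℂ) * z) - 1) * ((τ : ℂ) ^ (-1 - s : ℂ)) := by
  have hz0 : z ≠ 0 := by
    intro h; rw [h] at hz; simp at hz
  have hs0 : (s:ℂ) ≠ 0 := Complex.ofReal_ne_zero.mpr (ne_of_gt hs.1)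
  have hΓpos : 0 < Real.Gamma (1 - s) := Real.Gamma_pos_of_pos (by linarith [hs.2])
  have hΓ0 : ((Real.Gamma (1 - s) : ℝ) : ℂ) ≠ 0 := Complex.ofReal_ne_zero.mpr hΓpos.ne'
  have hrw : (∫ τ in Set.Ioi (0 : ℝ),
        (Complex.exp (-(τ : ℂ) * z) - 1) * ((τ : ℂ) ^ (-1 - s : ℂ))) =
      ∫ τ : ℝ in Set.Ioi (0:ℝ), (Complex.exp (-(τ:ℂ) * z) - 1) * ((τ ^ (-1-s) : ℝ) : ℂ) := by
    refine setIntegral_congr_fun measurableSet_Ioi fun τ hτ => ?_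
    rw [Set.mem_Ioi] at hτ
    congr 1
    rw [Complex.ofReal_cpow hτ.le]
    push_cast
    ring_nf
  rw [hrw, ibp hs hz, gammaComplex hs hz]
  rw [show (s:ℂ) = ((s:ℂ) - 1) + 1 by ring, Complex.cpow_add _ _ hz0, Complex.cpow_one]
  field_simp
  ring_nf
  rw [mul_comm (s:ℂ), mul_assoc, mul_inv_cancel₀ hs0, mul_one]
end
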